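/- arXiv:2402.19455 — 3 statements merged into one kernel-verified Lean document; each statement's English description precedes it below -/
import Mathlib

section
/- Suppose π(φ, x) is a joint probability density on Φ × X with conditionals π(φ | x) = p(φ | x) and π(x | φ) = q(x | φ), where p(φ, x) is another joint density with the same φ-conditional p(φ | x) and marginal p(x). Assume all densities are strictly positive. Then for every φ, the ratio of marginals satisfies p(φ)/π(φ) = ∫_X [q(x | φ)/p(x | φ)] p(x) dx. -/
open MeasureTheory Real

/-- If `π'` and `p` are strictly positive joint densities on `Φ × X` sharing the
same `φ`-conditional, and the `x`-conditional of `π'` is `q`, then for every `φ`,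
`p(φ)/π'(φ) = ∫ (q(x|φ)/p(x|φ)) p(x) dx`. -/
theorem stmt_6 {Φ X : Type*} [MeasurableSpace Φ] [MeasurableSpace X]
    (μ : Measure Φ) (ν : Measure X) [SigmaFinite μ] [SigmaFinite ν]
    (p π' : Φ × X → ℝ) (q : Φ → X → ℝ)
    (hpm : Measurable p) (hπ'm : Measurable π')
    (hppos : ∀ z, 0 < p z) (hπ'pos : ∀ z, 0 < π' z)
    (hpint : Integrable p (μ.prod ν)) (hπ'int : Integrable π' (μ.prod ν))
    (hp1 : ∫ z, p z ∂(μ.prod ν) = 1) (hπ'1 : ∫ z, π' z ∂(μ.prod ν) = 1)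
    (pX π'X : X → ℝ) (pΦ π'Φ : Φ → ℝ)
    (hpX : ∀ x, pX x = ∫ φ, p (φ, x) ∂μ) (hπ'X : ∀ x, π'X x = ∫ φ, π' (φ, x) ∂μ)
    (hpΦ : ∀ φ, pΦ φ = ∫ x, p (φ, x) ∂ν) (hπ'Φ : ∀ φ, π'Φ φ = ∫ x, π' (φ, x) ∂ν)
    (hshared : ∀ φ x, π' (φ, x) / π'X x = p (φ, x) / pX x)
    (hq : ∀ φ x, π' (φ, x) / π'Φ φ = q φ x) :
    ∀ φ, pΦ φ / π'Φ φ = ∫ x, (q φ x / (p (φ, x) / pΦ φ)) * pX x ∂ν := by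
  have cross : ∀ φ x, π' (φ, x) * pX x = p (φ, x) * π'X x := by
    intro φ x
    have h := hshared φ x
    by_cases hs : π'X x = 0
    · rw [hs, div_zero] at h
      have ht : pX x = 0 := by
        rcases div_eq_zero_iff.mp h.symm with h' | h'
        · exact absurd h' (hppos (φ, x)).ne'
        · exact h'
      rw [hs, ht]; ring
    · by_cases ht : pX x = 0
      · rw [ht, div_zero] at h
        exact absurd (div_eq_zero_iff.mp h) (by push_neg; exact ⟨(hπ'pos (φ, x)).ne', hs⟩)
      · field_simp at h; linarith
  have hπ'Xint : ∫ x, π'X x ∂ν = 1 := by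
    simp_rw [hπ'X]
    rw [← MeasureTheory.integral_prod_symm _ hπ'int, hπ'1]
  intro φ
  by_cases hπ'Φ0 : π'Φ φ = 0
  · simp [← hq, hπ'Φ0]
  · by_cases hpΦ0 : pΦ φ = 0
    · simp [hpΦ0]
    · have key : ∀ x, q φ x / (p (φ, x) / pΦ φ) * pX x = π'X x * (pΦ φ / π'Φ φ) := by
        intro x
        rw [← hq]
        have hp := (hppos (φ, x)).ne'
        have hc := cross φ x
        field_simp
        linear_combination hc
      simp_rw [key]
      rw [integral_mul_const, hπ'Xint, one_mul]
end

section
/- Under the hypotheses of the previous statement (π and p strictly positive joint densities on Φ × X sharing the conditional p(φ | x), with π(x | φ) = q(x | φ)), the Kullback–Leibler divergence between the φ-marginals satisfies KL(p(φ) ‖ π(φ)) = E_{φ ∼ p(φ)} [ log E_{x ∼ p(x)} ( q(x|φ) / p(x|φ) ) ]. -/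
open MeasureTheory Real

/-- Under the hypotheses of Statement 6, the Kullback–Leibler divergence between
the `φ`-marginals satisfies
`KL(p(φ) ‖ π'(φ)) = E_{φ ∼ p(φ)} [ log E_{x ∼ p(x)} ( q(x|φ) / p(x|φ) ) ]`. -/
theorem stmt_7 {Φ X : Type*} [MeasurableSpace Φ] [MeasurableSpace X]
    (μ : Measure Φ) (ν : Measure X) [SigmaFinite μ] [SigmaFinite ν]
    (p π' : Φ × X → ℝ) (q : Φ → X → ℝ)
    (hpm : Measurable p) (hπ'm : Measurable π')
    (hppos : ∀ z, 0 < p z) (hπ'pos : ∀ z, 0 < π' z)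
    (hpint : Integrable p (μ.prod ν)) (hπ'int : Integrable π' (μ.prod ν))
    (hp1 : ∫ z, p z ∂(μ.prod ν) = 1) (hπ'1 : ∫ z, π' z ∂(μ.prod ν) = 1)
    (pX π'X : X → ℝ) (pΦ π'Φ : Φ → ℝ)
    (hpX : ∀ x, pX x = ∫ φ, p (φ, x) ∂μ) (hπ'X : ∀ x, π'X x = ∫ φ, π' (φ, x) ∂μ)
    (hpΦ : ∀ φ, pΦ φ = ∫ x, p (φ, x) ∂ν) (hπ'Φ : ∀ φ, π'Φ φ = ∫ x, π' (φ, x) ∂ν)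
    (hshared : ∀ φ x, π' (φ, x) / π'X x = p (φ, x) / pX x)
    (hq : ∀ φ x, π' (φ, x) / π'Φ φ = q φ x) :
    ∫ φ, pΦ φ * Real.log (pΦ φ / π'Φ φ) ∂μ
      = ∫ φ, pΦ φ * Real.log (∫ x, (q φ x / (p (φ, x) / pΦ φ)) * pX x ∂ν) ∂μ := by
  -- cross multiplication identity
  have hcross : ∀ φ x, π' (φ, x) * pX x = p (φ, x) * π'X x := by
    intro φ x
    by_cases hπX : π'X x = 0
    · have h0 : p (φ, x) / pX x = 0 := by rw [← hshared, hπX, div_zero]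
      rcases div_eq_zero_iff.mp h0 with h | h
      · exact absurd h (hppos (φ, x)).ne'
      · rw [hπX, h, mul_zero, mul_zero]
    · have hpXne : pX x ≠ 0 := by
        intro h
        have h0 : π' (φ, x) / π'X x = 0 := by rw [hshared, h, div_zero]
        rcases div_eq_zero_iff.mp h0 with h' | h'
        · exact (hπ'pos (φ, x)).ne' h'
        · exact hπX h'
      exact (div_eq_div_iff hπX hpXne).mp (hshared φ x)
  -- total mass of π'X
  have hπ'X1 : ∫ x, π'X x ∂ν = 1 := by
    have hswap :
        ∫ φ, ∫ x, π' (φ, x) ∂ν ∂μ = ∫ x, ∫ φ, π' (φ, x) ∂μ ∂ν :=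
      integral_integral_swap (f := fun φ x => π' (φ, x)) hπ'int
    have hprod : ∫ φ, ∫ x, π' (φ, x) ∂ν ∂μ = ∫ z, π' z ∂(μ.prod ν) :=
      (integral_prod π' hπ'int).symm
    calc ∫ x, π'X x ∂ν = ∫ x, ∫ φ, π' (φ, x) ∂μ ∂ν := by simp_rw [hπ'X]
      _ = ∫ φ, ∫ x, π' (φ, x) ∂ν ∂μ := hswap.symm
      _ = 1 := by rw [hprod, hπ'1]
  -- pointwise identity for the inner integrand
  have hinner : ∀ φ x, q φ x / (p (φ, x) / pΦ φ) * pX x = pΦ φ / π'Φ φ * π'X x := by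
    intro φ x
    rw [← hq]
    by_cases hpΦ0 : pΦ φ = 0
    · simp [hpΦ0]
    by_cases hπΦ0 : π'Φ φ = 0
    · simp [hπΦ0]
    have hpne : p (φ, x) ≠ 0 := (hppos (φ, x)).ne'
    field_simp
    linear_combination hcross φ x
  -- inner integral evaluates to pΦ φ / π'Φ φ
  have hinnerint : ∀ φ, ∫ x, q φ x / (p (φ, x) / pΦ φ) * pX x ∂ν = pΦ φ / π'Φ φ := by
    intro φ
    calc ∫ x, q φ x / (p (φ, x) / pΦ φ) * pX x ∂ν
        = ∫ x, pΦ φ / π'Φ φ * π'X x ∂ν := by simp_rw [hinner]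
      _ = pΦ φ / π'Φ φ * ∫ x, π'X x ∂ν := integral_const_mul _ _
      _ = pΦ φ / π'Φ φ := by rw [hπ'X1, mul_one]
  simp_rw [hinnerint]
end

section
/- Let f(φ | x) and g(x | φ) be conditional densities of a joint density π(φ, x) with strictly positive marginals. Then for almost every φ, π(φ) = ( ∫_X g(x | φ)/f(φ | x) dx )^{−1}; in particular the integral ∫_X g(x|φ)/f(φ|x) dx is finite for almost every φ. -/
open MeasureTheory Real

/-- If `f(φ|x)` and `g(x|φ)` are the conditional densities of a joint density
`π'` with strictly positive marginals, then for almost every `φ`,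
`π'(φ) = (∫ g(x|φ)/f(φ|x) dx)⁻¹`; in particular the integral is finite for a.e. `φ`. -/
theorem stmt_10 {Φ X : Type*} [MeasurableSpace Φ] [MeasurableSpace X]
    (μ : Measure Φ) (ν : Measure X) [SigmaFinite μ] [SigmaFinite ν]
    (π' : Φ × X → ℝ) (hπ'm : Measurable π') (hπ'pos : ∀ z, 0 < π' z)
    (hπ'int : Integrable π' (μ.prod ν)) (hπ'1 : ∫ z, π' z ∂(μ.prod ν) = 1)
    (π'Φ : Φ → ℝ) (π'X : X → ℝ)
    (hπ'Φ : ∀ φ, π'Φ φ = ∫ x, π' (φ, x) ∂ν) (hπ'X : ∀ x, π'X x = ∫ φ, π' (φ, x) ∂μ)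
    (hπ'Φpos : ∀ φ, 0 < π'Φ φ) (hπ'Xpos : ∀ x, 0 < π'X x)
    (f g : Φ → X → ℝ)
    (hf : ∀ φ x, f φ x = π' (φ, x) / π'X x)
    (hg : ∀ φ x, g φ x = π' (φ, x) / π'Φ φ) :
    ∀ᵐ φ ∂μ, Integrable (fun x => g φ x / f φ x) ν ∧
      π'Φ φ = (∫ x, g φ x / f φ x ∂ν)⁻¹ := by
  have key : ∀ φ x, g φ x / f φ x = π'X x / π'Φ φ := by
    intro φ x
    rw [hf, hg]
    have h1 := (hπ'pos (φ, x)).ne'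
    have h2 := (hπ'Xpos x).ne'
    have h3 := (hπ'Φpos φ).ne'
    field_simp
  have hXint : Integrable π'X ν := by
    have := hπ'int.swap.integral_prod_left
    have heq : π'X = fun x => ∫ y, π' (y, x) ∂μ := funext hπ'X
    rw [heq]; exact this
  have hsum : ∫ x, π'X x ∂ν = 1 := by
    have hswap : ∫ z, π' z.swap ∂(ν.prod μ) = ∫ z, π' z ∂(μ.prod ν) :=
      integral_prod_swap π'
    calc ∫ x, π'X x ∂ν = ∫ x, ∫ φ, π' (φ, x) ∂μ ∂ν := by simp_rw [hπ'X]
      _ = ∫ z, π' z.swap ∂(ν.prod μ) := (integral_prod _ hπ'int.swap).symm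
      _ = 1 := by rw [hswap, hπ'1]
  refine Filter.Eventually.of_forall fun φ => ?_
  have hne := (hπ'Φpos φ).ne'
  constructor
  · simp_rw [key φ]
    exact hXint.div_const _
  · simp_rw [key φ, div_eq_mul_inv, integral_mul_const, hsum, one_mul, inv_inv]
end
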